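/- Let u ∈ F_k be a nontrivial element which is not a proper power, let d ≥ 2, and set w = u^d. Then the set of w-critical subgroups is Crit(w) = { ⟨u^m⟩ : 1 ≤ m < d and m divides d }; in particular π(w) = 1 and |Crit(w)| = δ(d) − 1, where δ(d) is the number of positive divisors of d. -/

import Mathlib

/-- `H` is a free factor of `J`: there is a subgroup `H' ≤ J` such that `J` is the
internal free product of `H` and `H'`, i.e. the homomorphism from the (external)
free product `H ∗ H'` induced by the inclusions is injective with range `J`. -/
def IsFreeFactor {F : Type*} [Group F] (H J : Subgroup F) : Prop :=
  H ≤ J ∧ ∃ H' : Subgroup F, H' ≤ J ∧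
    Function.Injective (Monoid.Coprod.lift H.subtype H'.subtype) ∧
    (Monoid.Coprod.lift H.subtype H'.subtype).range = J

/-- The rank of a subgroup: the minimal number of generators (`⊤` if the subgroup is
not finitely generated). For subgroups of free groups this is the size of a basis. -/
noncomputable def rkS {F : Type*} [Group F] (J : Subgroup F) : ℕ∞ :=
  sInf {r : ℕ∞ | ∃ S : Set F, Subgroup.closure S = J ∧ S.encard = r}

/-- The primitivity rank of `H`:
`π(H) = min { rk J : H ≤ J ≤ F and H is not a free factor of J }`, and `∞` (i.e. `⊤`)
if no such `J` exists. -/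
noncomputable def primRank {F : Type*} [Group F] (H : Subgroup F) : ℕ∞ :=
  sInf {r : ℕ∞ | ∃ J : Subgroup F, H ≤ J ∧ ¬ IsFreeFactor H J ∧ rkS J = r}

/-- The set of `H`-critical subgroups: the subgroups attaining the minimum in the
definition of the primitivity rank of `H`. -/
def Crit {F : Type*} [Group F] (H : Subgroup F) : Set (Subgroup F) :=
  {J | H ≤ J ∧ ¬ IsFreeFactor H J ∧ rkS J = primRank H}


namespace CritAux

open Subgroup

variable {α : Type*}

/-- Exponent-sum homomorphism of a free group at a letter. -/
def expHom [DecidableEq α] (a : α) : FreeGroup α →* Multiplicative ℤ :=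
  FreeGroup.lift (fun i => if i = a then Multiplicative.ofAdd 1 else 1)

@[simp] lemma expHom_of_self [DecidableEq α] (a : α) :
    expHom a (FreeGroup.of a) = Multiplicative.ofAdd 1 := by
  simp [expHom]

lemma expHom_of_ne [DecidableEq α] {a b : α} (h : b ≠ a) :
    expHom a (FreeGroup.of b) = 1 := by
  simp [expHom, h]

lemma of_mul_of_ne {a b : α} (hab : a ≠ b) :
    FreeGroup.of a * FreeGroup.of b ≠ FreeGroup.of b * FreeGroup.of a := by
  classical
  intro h
  set σ : Equiv.Perm (Fin 3) := Equiv.swap 0 1 with hσ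
  set τ : Equiv.Perm (Fin 3) := Equiv.swap 1 2 with hτ
  set φ := FreeGroup.lift (fun i => if i = a then σ else if i = b then τ else 1) with hφ
  have h1 : φ (FreeGroup.of a) = σ := by simp [hφ]
  have h2 : φ (FreeGroup.of b) = τ := by simp [hφ, hab.symm, Ne.symm hab]
  have h3 := congrArg φ h
  rw [map_mul, map_mul, h1, h2] at h3
  have h4 : (σ * τ) 0 = (τ * σ) 0 := by rw [h3]
  simp [hσ, hτ, Equiv.swap_apply_def] at h4


lemma subsingleton_of_rel {ι : Type*} (x y : FreeGroup ι) (δ ν : ℤ) (hδ : δ ≠ 0)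
    (hrel : x ^ δ = y ^ ν) (hgen : closure ({x, y} : Set (FreeGroup ι)) = ⊤) :
    Subsingleton ι := by
  classical
  constructor
  intro a b
  by_contra hab
  set pa := ((expHom a) x).toAdd with hpa
  set pb := ((expHom b) x).toAdd with hpb
  set qa := ((expHom a) y).toAdd with hqa
  set qb := ((expHom b) y).toAdd with hqb
  have hra : δ * pa = ν * qa := by
    have h1 := congrArg (fun z => ((expHom a) z).toAdd) hrel
    simpa [map_zpow, toAdd_zpow, smul_eq_mul] using h1
  have hrb : δ * pb = ν * qb := by
    have h1 := congrArg (fun z => ((expHom b) z).toAdd) hrel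
    simpa [map_zpow, toAdd_zpow, smul_eq_mul] using h1
  set χ : FreeGroup ι →* Multiplicative ℤ := MonoidHom.mk'
    (fun z => Multiplicative.ofAdd (qb * ((expHom a) z).toAdd - qa * ((expHom b) z).toAdd))
    (by
      intro z w
      rw [← ofAdd_add]
      congr 1
      simp only [map_mul, toAdd_mul]
      ring) with hχ
  have hχx : χ x = 1 := by
    have : δ * (qb * pa - qa * pb) = 0 := by
      have : δ * (qb * pa - qa * pb) = qb * (δ * pa) - qa * (δ * pb) := by ring
      rw [this, hra, hrb]; ring
    have h0 : qb * pa - qa * pb = 0 := by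
      rcases mul_eq_zero.1 this with h | h
      · exact absurd h hδ
      · exact h
    show Multiplicative.ofAdd (qb * pa - qa * pb) = 1
    rw [h0]; rfl
  have hχy : χ y = 1 := by
    show Multiplicative.ofAdd (qb * qa - qa * qb) = 1
    rw [show qb * qa - qa * qb = 0 by ring]; rfl
  have hker : ∀ z, χ z = 1 := by
    intro z
    have hle : closure ({x, y} : Set (FreeGroup ι)) ≤ χ.ker := by
      rw [closure_le]
      rintro g (rfl | rfl)
      · exact hχx
      · exact hχy
    rw [hgen] at hle
    exact hle (mem_top z)
  have ha1 : qb = 0 := by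
    have h0 : Multiplicative.ofAdd (qb * ((expHom a) (FreeGroup.of a)).toAdd
        - qa * ((expHom b) (FreeGroup.of a)).toAdd) = 1 := hker (FreeGroup.of a)
    rw [expHom_of_self, expHom_of_ne hab] at h0
    have h1 := congrArg Multiplicative.toAdd h0
    simpa using h1
  have hb1 : qa = 0 := by
    have h0 : Multiplicative.ofAdd (qb * ((expHom a) (FreeGroup.of b)).toAdd
        - qa * ((expHom b) (FreeGroup.of b)).toAdd) = 1 := hker (FreeGroup.of b)
    rw [expHom_of_self, expHom_of_ne (Ne.symm hab)] at h0
    have h1 := congrArg Multiplicative.toAdd h0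
    simpa using h1
  have hpa0 : pa = 0 := by
    have : δ * pa = 0 := by rw [hra, hb1]; ring
    rcases mul_eq_zero.1 this with h | h
    · exact absurd h hδ
    · exact h
  have hxa : (expHom a) x = 1 := by
    have : ((expHom a) x).toAdd = 0 := hpa0
    simpa using congrArg Multiplicative.ofAdd this
  have hya : (expHom a) y = 1 := by
    have : ((expHom a) y).toAdd = 0 := hb1
    simpa using congrArg Multiplicative.ofAdd this
  have : ∀ z, (expHom a) z = 1 := by
    intro z
    have hle : closure ({x, y} : Set (FreeGroup ι)) ≤ (expHom a).ker := by
      rw [closure_le]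
      rintro g (rfl | rfl)
      · exact hxa
      · exact hya
    rw [hgen] at hle
    exact hle (mem_top z)
  have := this (FreeGroup.of a)
  rw [expHom_of_self] at this
  have := congrArg Multiplicative.toAdd this
  simpa using this

lemma subsingleton_of_commute {ι : Type*} (x y : FreeGroup ι) (h : Commute x y)
    (hgen : closure ({x, y} : Set (FreeGroup ι)) = ⊤) : Subsingleton ι := by
  classical
  constructor
  intro a b
  by_contra hab
  have hcent : ∀ c : FreeGroup ι, x * c = c * x → y * c = c * y → ∀ z, c * z = z * c := by
    intro c hxc hyc z
    have hle : closure ({x, y} : Set (FreeGroup ι)) ≤ centralizer {c} := by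
      rw [closure_le]
      intro g hg
      simp only [Set.mem_insert_iff, Set.mem_singleton_iff] at hg
      rw [SetLike.mem_coe, mem_centralizer_iff]
      rintro e (rfl : e = c)
      rcases hg with hg | hg
      · rw [hg]; exact hxc.symm
      · rw [hg]; exact hyc.symm
    rw [hgen] at hle
    have hz := hle (mem_top z)
    rw [mem_centralizer_iff] at hz
    exact hz c rfl
  have step1 : ∀ z, x * z = z * x := hcent x rfl h.eq.symm
  have step2 : ∀ z, y * z = z * y := hcent y h.eq rfl
  have key : ∀ z w, z * w = w * z := fun z w => hcent z (step1 z) (step2 z) w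
  exact of_mul_of_ne hab (key (FreeGroup.of a) (FreeGroup.of b))


lemma closure_pair_top (x y : FreeGroup α) :
    closure ({⟨x, subset_closure (Set.mem_insert x {y})⟩,
        ⟨y, subset_closure (Set.mem_insert_of_mem x rfl)⟩} :
      Set (closure ({x, y} : Set (FreeGroup α)))) = ⊤ := by
  have h := Subgroup.closure_closure_coe_preimage (k := ({x, y} : Set (FreeGroup α)))
  rw [← h]
  congr 1
  ext z
  simp only [Set.mem_insert_iff, Set.mem_singleton_iff, Set.mem_preimage, Subtype.ext_iff]

lemma exists_zpowers_of_subsingleton (G : Type*) [Group G] [IsFreeGroup G]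
    (h : Subsingleton (IsFreeGroup.Generators G)) : ∃ c : G, ∀ z : G, z ∈ zpowers c := by
  set e := IsFreeGroup.toFreeGroup (G := G)
  rcases isEmpty_or_nonempty (IsFreeGroup.Generators G) with he | hne
  · refine ⟨1, fun z => ?_⟩
    have htop : (⊤ : Subgroup (FreeGroup (IsFreeGroup.Generators G))) = ⊥ := by
      rw [← FreeGroup.closure_range_of]
      have : (Set.range (FreeGroup.of : IsFreeGroup.Generators G → _)) = ∅ :=
        Set.range_eq_empty _
      rw [this, Subgroup.closure_empty]
    have hz : e z = 1 := by
      have : e z ∈ (⊥ : Subgroup (FreeGroup (IsFreeGroup.Generators G))) := by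
        rw [← htop]; exact mem_top _
      simpa using this
    have : z = 1 := by
      have := congrArg e.symm hz
      simpa using this
    rw [this]; exact one_mem _
  · obtain ⟨a0⟩ := hne
    refine ⟨e.symm (FreeGroup.of a0), fun z => ?_⟩
    have hz : e z ∈ zpowers (FreeGroup.of a0) := by
      have hsub : (Set.range (FreeGroup.of : IsFreeGroup.Generators G → _)) ⊆ {FreeGroup.of a0} := by
        rintro t ⟨i, rfl⟩
        rw [Subsingleton.elim i a0]
        rfl
      have := FreeGroup.closure_range_of (IsFreeGroup.Generators G)
      have hle : (⊤ : Subgroup (FreeGroup (IsFreeGroup.Generators G))) ≤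
          closure {FreeGroup.of a0} := by
        rw [← this]
        exact closure_mono hsub
      rw [← zpowers_eq_closure] at hle
      exact hle (mem_top _)
    obtain ⟨i, hi⟩ := mem_zpowers_iff.1 hz
    refine mem_zpowers_iff.2 ⟨i, ?_⟩
    have := congrArg e.symm hi
    rw [map_zpow] at this
    simpa using this

lemma exists_common_zpowers_aux (x y : FreeGroup α)
    (hss : Subsingleton (IsFreeGroup.Generators (closure ({x, y} : Set (FreeGroup α))))) :
    ∃ c : FreeGroup α, x ∈ zpowers c ∧ y ∈ zpowers c := by
  set S := closure ({x, y} : Set (FreeGroup α)) with hS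
  have hxS : x ∈ S := subset_closure (Set.mem_insert x {y})
  have hyS : y ∈ S := subset_closure (Set.mem_insert_of_mem x rfl)
  obtain ⟨c0, hc0⟩ := exists_zpowers_of_subsingleton S hss
  refine ⟨(c0 : FreeGroup α), ?_, ?_⟩
  · obtain ⟨i, hi⟩ := mem_zpowers_iff.1 (hc0 ⟨x, hxS⟩)
    refine mem_zpowers_iff.2 ⟨i, ?_⟩
    have := congrArg (Subtype.val) hi
    simpa using this
  · obtain ⟨i, hi⟩ := mem_zpowers_iff.1 (hc0 ⟨y, hyS⟩)
    refine mem_zpowers_iff.2 ⟨i, ?_⟩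
    have := congrArg (Subtype.val) hi
    simpa using this

lemma gen_transfer (x y : FreeGroup α) :
    closure ({IsFreeGroup.toFreeGroup (G := closure ({x, y} : Set (FreeGroup α)))
          ⟨x, subset_closure (Set.mem_insert x {y})⟩,
        IsFreeGroup.toFreeGroup (G := closure ({x, y} : Set (FreeGroup α)))
          ⟨y, subset_closure (Set.mem_insert_of_mem x rfl)⟩} :
        Set (FreeGroup (IsFreeGroup.Generators (closure ({x, y} : Set (FreeGroup α)))))) = ⊤ := by
  set S := closure ({x, y} : Set (FreeGroup α)) with hS
  set e := IsFreeGroup.toFreeGroup (G := S) with he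
  have h0 := closure_pair_top x y
  have h1 : closure ({e ⟨x, subset_closure (Set.mem_insert x {y})⟩,
        e ⟨y, subset_closure (Set.mem_insert_of_mem x rfl)⟩} :
        Set (FreeGroup (IsFreeGroup.Generators S))) =
      Subgroup.map e.toMonoidHom (closure {⟨x, subset_closure (Set.mem_insert x {y})⟩,
        ⟨y, subset_closure (Set.mem_insert_of_mem x rfl)⟩}) := by
    rw [MonoidHom.map_closure]
    congr 1
    rw [Set.image_insert_eq, Set.image_singleton]
    rfl
  rw [h1, h0]
  exact Subgroup.map_top_of_surjective _ e.surjective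

lemma exists_common_zpowers (x y : FreeGroup α) (δ ν : ℤ) (hδ : δ ≠ 0)
    (hrel : x ^ δ = y ^ ν) : ∃ c : FreeGroup α, x ∈ zpowers c ∧ y ∈ zpowers c := by
  set S := closure ({x, y} : Set (FreeGroup α)) with hS
  set e := IsFreeGroup.toFreeGroup (G := S) with he
  apply exists_common_zpowers_aux
  apply subsingleton_of_rel (e ⟨x, subset_closure (Set.mem_insert x {y})⟩)
    (e ⟨y, subset_closure (Set.mem_insert_of_mem x rfl)⟩) δ ν hδ
  · rw [← map_zpow, ← map_zpow]
    congr 1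
    ext
    rw [SubgroupClass.coe_zpow, SubgroupClass.coe_zpow]
    exact hrel
  · exact gen_transfer x y

lemma exists_common_zpowers_of_commute (x y : FreeGroup α) (h : Commute x y) :
    ∃ c : FreeGroup α, x ∈ zpowers c ∧ y ∈ zpowers c := by
  set S := closure ({x, y} : Set (FreeGroup α)) with hS
  set e := IsFreeGroup.toFreeGroup (G := S) with he
  apply exists_common_zpowers_aux
  apply subsingleton_of_commute (e ⟨x, subset_closure (Set.mem_insert x {y})⟩)
    (e ⟨y, subset_closure (Set.mem_insert_of_mem x rfl)⟩)
  · unfold Commute SemiconjBy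
    rw [← map_mul, ← map_mul]
    congr 1
    ext
    push_cast
    exact h.eq
  · exact gen_transfer x y


/-- Free groups are torsion-free. -/
lemma eq_zero_of_zpow_eq_one {x : FreeGroup α} (hx : x ≠ 1) {n : ℤ} (h : x ^ n = 1) :
    n = 0 := by
  classical
  set S := closure ({x, x} : Set (FreeGroup α)) with hS
  set e := IsFreeGroup.toFreeGroup (G := S) with he
  set x' := e ⟨x, subset_closure (Set.mem_insert x {x})⟩ with hx'
  have hgen : closure ({x'} : Set (FreeGroup (IsFreeGroup.Generators S))) = ⊤ := by
    have h0 := gen_transfer x x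
    have hset : ({(IsFreeGroup.toFreeGroup (G := closure ({x, x} : Set (FreeGroup α))))
          ⟨x, subset_closure (Set.mem_insert x {x})⟩,
        (IsFreeGroup.toFreeGroup (G := closure ({x, x} : Set (FreeGroup α))))
          ⟨x, subset_closure (Set.mem_insert_of_mem x rfl)⟩} :
        Set (FreeGroup (IsFreeGroup.Generators S))) = {x'} := Set.pair_eq_singleton x'
    rw [hset] at h0
    exact h0
  have hx'ne : x' ≠ 1 := by
    intro h1
    apply hx
    have h2 : (⟨x, subset_closure (Set.mem_insert x {x})⟩ : S) = 1 := by
      apply e.injective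
      rw [map_one]
      exact h1
    exact congrArg Subtype.val h2
  have hx'n : x' ^ n = 1 := by
    rw [hx', ← map_zpow, ← map_one e]
    congr 1
    ext
    rw [SubgroupClass.coe_zpow]
    simpa using h
  rcases isEmpty_or_nonempty (IsFreeGroup.Generators S) with hemp | ⟨⟨a⟩⟩
  · exfalso
    apply hx'ne
    have htop : (⊤ : Subgroup (FreeGroup (IsFreeGroup.Generators S))) = ⊥ := by
      rw [← FreeGroup.closure_range_of, Set.range_eq_empty, Subgroup.closure_empty]
    have : x' ∈ (⊥ : Subgroup (FreeGroup (IsFreeGroup.Generators S))) := by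
      rw [← htop]; exact mem_top _
    simpa using this
  · set pa := ((expHom a) x').toAdd with hpa
    have hpane : pa ≠ 0 := by
      intro h0
      have hxa : (expHom a) x' = 1 := by
        have : ((expHom a) x').toAdd = 0 := h0
        simpa using congrArg Multiplicative.ofAdd this
      have hle : closure ({x'} : Set (FreeGroup (IsFreeGroup.Generators S))) ≤
          (expHom a).ker := by
        rw [closure_le]
        rintro g (rfl : g = x')
        exact hxa
      rw [hgen] at hle
      have := hle (mem_top (FreeGroup.of a))
      rw [MonoidHom.mem_ker, expHom_of_self] at this
      have := congrArg Multiplicative.toAdd this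
      simpa using this
    have := congrArg (fun z => ((expHom a) z).toAdd) hx'n
    simp only [map_zpow, toAdd_zpow, smul_eq_mul, map_one, toAdd_one] at this
    rcases mul_eq_zero.1 this with h0 | h0
    · exact h0
    · exact absurd h0 hpane

lemma zpow_left_inj {x : FreeGroup α} (hx : x ≠ 1) {m n : ℤ} (h : x ^ m = x ^ n) :
    m = n := by
  have : x ^ (m - n) = 1 := by
    rw [zpow_sub, h, mul_inv_cancel]
  have := eq_zero_of_zpow_eq_one hx this
  omega

lemma pow_ne_one {x : FreeGroup α} (hx : x ≠ 1) {n : ℕ} (hn : n ≠ 0) : x ^ n ≠ 1 := by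
  intro h
  have : x ^ (n : ℤ) = 1 := by rw [zpow_natCast]; exact h
  have := eq_zero_of_zpow_eq_one hx this
  omega

lemma noncomm_zpow {s t : ℤ} (hs : s ≠ 0) (ht : t ≠ 0) :
    ¬ Commute ((FreeGroup.of true) ^ s) ((FreeGroup.of false) ^ t) := by
  intro h
  obtain ⟨c, hα, hβ⟩ := exists_common_zpowers_of_commute _ _ h
  obtain ⟨i, hi⟩ := mem_zpowers_iff.1 hα
  obtain ⟨j, hj⟩ := mem_zpowers_iff.1 hβ
  set tc := ((expHom true) c).toAdd with htc
  set fc := ((expHom false) c).toAdd with hfc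
  have h1 : i * tc = s := by
    have := congrArg (fun z => ((expHom (true : Bool)) z).toAdd) hi
    simpa [map_zpow, toAdd_zpow, smul_eq_mul, expHom_of_self] using this
  have h2 : i * fc = 0 := by
    have := congrArg (fun z => ((expHom (false : Bool)) z).toAdd) hi
    simpa [map_zpow, toAdd_zpow, smul_eq_mul, hfc,
      expHom_of_ne (show (true : Bool) ≠ false by simp)] using this
  have h3 : j * fc = t := by
    have := congrArg (fun z => ((expHom (false : Bool)) z).toAdd) hj
    simpa [map_zpow, toAdd_zpow, smul_eq_mul, expHom_of_self] using this
  have hine : i ≠ 0 := by rintro rfl; simp at h1; exact hs h1.symm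
  have hfc0 : fc = 0 := by
    rcases mul_eq_zero.1 h2 with h0 | h0
    · exact absurd h0 hine
    · exact h0
  rw [hfc0, mul_zero] at h3
  exact ht h3.symm

/-- Discrete logarithm on the cyclic subgroup generated by `x ≠ 1`. -/
noncomputable def logHom (x : FreeGroup α) (hx : x ≠ 1) :
    (zpowers x) →* Multiplicative ℤ :=
  MonoidHom.mk' (fun y => Multiplicative.ofAdd (mem_zpowers_iff.1 y.2).choose)
    (by
      intro y z
      rw [← ofAdd_add]
      congr 1
      apply zpow_left_inj hx
      rw [zpow_add, (mem_zpowers_iff.1 y.2).choose_spec, (mem_zpowers_iff.1 z.2).choose_spec,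
        (mem_zpowers_iff.1 (y * z).2).choose_spec]
      rfl)

lemma logHom_spec (x : FreeGroup α) (hx : x ≠ 1) (y : zpowers x) :
    x ^ ((logHom x hx) y).toAdd = (y : FreeGroup α) :=
  (mem_zpowers_iff.1 y.2).choose_spec


lemma isFreeFactor_self {F : Type*} [Group F] (H : Subgroup F) : IsFreeFactor H H := by
  refine ⟨le_rfl, ⊥, bot_le, ?_, ?_⟩
  · have hsurj : ∀ y : Monoid.Coprod H (⊥ : Subgroup F), ∃ h : H, y = Monoid.Coprod.inl h := by
      intro y
      induction y using Monoid.Coprod.induction_on with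
      | inl m => exact ⟨m, rfl⟩
      | inr n =>
        refine ⟨1, ?_⟩
        have hn : n = 1 := by
          have h2 := n.2
          rw [Subgroup.mem_bot] at h2
          exact Subtype.ext (by simpa using h2)
        rw [hn, map_one, map_one]
      | mul z w hz hw =>
        obtain ⟨h1, rfl⟩ := hz
        obtain ⟨h2, rfl⟩ := hw
        exact ⟨h1 * h2, (map_mul _ _ _).symm⟩
    intro y z hyz
    obtain ⟨h1, rfl⟩ := hsurj y
    obtain ⟨h2, rfl⟩ := hsurj z
    rw [Monoid.Coprod.lift_apply_inl, Monoid.Coprod.lift_apply_inl] at hyz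
    rw [Subtype.ext hyz]
  · rw [Monoid.Coprod.range_lift, Subgroup.range_subtype, Subgroup.range_subtype, sup_bot_eq]

lemma not_isFreeFactor_zpowers_pow (x : FreeGroup α) (hx : x ≠ 1) {s : ℕ}
    (hs : 2 ≤ s) : ¬ IsFreeFactor (zpowers (x ^ s)) (zpowers x) := by
  rintro ⟨hle, H', hle', hinj, hrange⟩
  by_cases hH' : H' = ⊥
  · subst hH'
    rw [Monoid.Coprod.range_lift, Subgroup.range_subtype, Subgroup.range_subtype,
      sup_bot_eq] at hrange
    have hxmem : x ∈ zpowers (x ^ s) := by rw [hrange]; exact mem_zpowers x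
    obtain ⟨j, hj⟩ := mem_zpowers_iff.1 hxmem
    have h1 : x ^ ((s : ℤ) * j) = x ^ (1 : ℤ) := by
      rw [zpow_mul, zpow_natCast, hj, zpow_one]
    have h2 := zpow_left_inj hx h1
    have h3 : (s : ℤ) ∣ 1 := ⟨j, h2.symm⟩
    have h4 := Int.le_of_dvd (by norm_num) h3
    omega
  · have hex : ∃ g ∈ H', g ≠ (1 : FreeGroup α) := by
      by_contra hcon
      push_neg at hcon
      apply hH'
      refine eq_bot_iff.2 (fun g hg => ?_)
      rw [Subgroup.mem_bot]
      exact hcon g hg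
    obtain ⟨b0, hb0mem, hb0ne⟩ := hex
    set b : H' := ⟨b0, hb0mem⟩ with hb
    obtain ⟨t, ht⟩ := mem_zpowers_iff.1 (hle' hb0mem)
    have htne : t ≠ 0 := by
      rintro rfl
      simp only [zpow_zero] at ht
      exact hb0ne ht.symm
    set a : (zpowers (x ^ s)) := ⟨x ^ s, mem_zpowers _⟩ with ha
    have hcomm : (Monoid.Coprod.lift (zpowers (x ^ s)).subtype H'.subtype)
        (Monoid.Coprod.inl a * Monoid.Coprod.inr b) =
        (Monoid.Coprod.lift (zpowers (x ^ s)).subtype H'.subtype)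
        (Monoid.Coprod.inr b * Monoid.Coprod.inl a) := by
      rw [map_mul, map_mul, Monoid.Coprod.lift_apply_inl, Monoid.Coprod.lift_apply_inr]
      show (x ^ s) * b0 = b0 * (x ^ s)
      rw [← ht, ← zpow_natCast x s, ← zpow_add, ← zpow_add, add_comm]
    have heq := hinj hcomm
    set ΦH : (zpowers (x ^ s)) →* FreeGroup Bool :=
      (zpowersHom (FreeGroup Bool) (FreeGroup.of true)).comp
        ((logHom x hx).comp (Subgroup.inclusion hle)) with hΦH
    set ΦH' : H' →* FreeGroup Bool :=
      (zpowersHom (FreeGroup Bool) (FreeGroup.of false)).comp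
        ((logHom x hx).comp (Subgroup.inclusion hle')) with hΦH'
    have hχ := congrArg (Monoid.Coprod.lift ΦH ΦH') heq
    rw [map_mul, map_mul, Monoid.Coprod.lift_apply_inl, Monoid.Coprod.lift_apply_inr] at hχ
    have hA : ΦH a = (FreeGroup.of true) ^ (s : ℤ) := by
      rw [hΦH]
      simp only [MonoidHom.comp_apply, zpowersHom_apply]
      congr 1
      apply zpow_left_inj hx
      rw [logHom_spec]
      show (↑a : FreeGroup α) = x ^ (s : ℤ)
      rw [zpow_natCast]
    have hB : ΦH' b = (FreeGroup.of false) ^ t := by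
      rw [hΦH']
      simp only [MonoidHom.comp_apply, zpowersHom_apply]
      congr 1
      apply zpow_left_inj hx
      rw [logHom_spec]
      exact ht.symm
    rw [hA, hB] at hχ
    exact noncomm_zpow (by exact_mod_cast (by omega : (s:ℤ) ≠ 0)) htne hχ


lemma rkS_zpowers_eq_one {F : Type*} [Group F] {x : F} (hx : x ≠ 1) :
    rkS (zpowers x) = 1 := by
  apply le_antisymm
  · exact sInf_le ⟨{x}, (zpowers_eq_closure x).symm, Set.encard_singleton x⟩
  · apply le_sInf
    rintro r ⟨S, hS, rfl⟩
    rw [ENat.one_le_iff_ne_zero]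
    intro h0
    rw [Set.encard_eq_zero] at h0
    subst h0
    rw [Subgroup.closure_empty] at hS
    have hmem := mem_zpowers x
    rw [← hS, Subgroup.mem_bot] at hmem
    exact hx hmem

lemma rkS_eq_zero {F : Type*} [Group F] {J : Subgroup F} (h : rkS J = 0) : J = ⊥ := by
  have hne : {r : ℕ∞ | ∃ S : Set F, Subgroup.closure S = J ∧ S.encard = r}.Nonempty := by
    by_contra hcon
    rw [Set.not_nonempty_iff_eq_empty] at hcon
    rw [rkS, hcon, sInf_empty] at h
    exact (by norm_num : (⊤ : ℕ∞) ≠ 0) h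
  have hmem := csInf_mem hne
  rw [show sInf {r : ℕ∞ | ∃ S : Set F, Subgroup.closure S = J ∧ S.encard = r} = rkS J from rfl,
    h] at hmem
  obtain ⟨S, hS, hcard⟩ := hmem
  rw [Set.encard_eq_zero] at hcard
  subst hcard
  rw [Subgroup.closure_empty] at hS
  exact hS.symm

lemma exists_gen_of_rkS_eq_one {F : Type*} [Group F] {J : Subgroup F} (h : rkS J = 1) :
    ∃ g : F, J = zpowers g := by
  have hne : {r : ℕ∞ | ∃ S : Set F, Subgroup.closure S = J ∧ S.encard = r}.Nonempty := by
    by_contra hcon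
    rw [Set.not_nonempty_iff_eq_empty] at hcon
    rw [rkS, hcon, sInf_empty] at h
    exact (by norm_num : (⊤ : ℕ∞) ≠ 1) h
  have hmem := csInf_mem hne
  rw [show sInf {r : ℕ∞ | ∃ S : Set F, Subgroup.closure S = J ∧ S.encard = r} = rkS J from rfl,
    h] at hmem
  obtain ⟨S, hS, hcard⟩ := hmem
  rw [Set.encard_eq_one] at hcard
  obtain ⟨g, rfl⟩ := hcard
  exact ⟨g, by rw [← hS, zpowers_eq_closure]⟩

lemma primRank_eq_one (u : FreeGroup α) (hu : u ≠ 1) {d : ℕ} (hd : 2 ≤ d) :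
    primRank (Subgroup.closure {u ^ d}) = 1 := by
  apply le_antisymm
  · apply sInf_le
    refine ⟨zpowers u, ?_, ?_, rkS_zpowers_eq_one hu⟩
    · rw [Subgroup.closure_le, Set.singleton_subset_iff, SetLike.mem_coe]
      exact ⟨(d : ℤ), zpow_natCast u d⟩
    · rw [← zpowers_eq_closure]
      exact not_isFreeFactor_zpowers_pow u hu hd
  · apply le_sInf
    rintro r ⟨J, hHJ, hnff, hrk⟩
    rw [ENat.one_le_iff_ne_zero]
    rintro rfl
    have hJbot : J = ⊥ := rkS_eq_zero hrk
    subst hJbot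
    have hmem : u ^ d ∈ (⊥ : Subgroup (FreeGroup α)) := hHJ (subset_closure (Set.mem_singleton _))
    rw [Subgroup.mem_bot] at hmem
    exact pow_ne_one hu (by omega) hmem

end CritAux

set_option maxHeartbeats 1000000 in
open CritAux Subgroup in
/-- Let `u ∈ F_k` be nontrivial and not a proper power, `d ≥ 2` and `w = u^d`. Then
`Crit(w) = { ⟨u^m⟩ : 1 ≤ m < d, m ∣ d }`; in particular `π(w) = 1` and
`|Crit(w)| = δ(d) - 1`, where `δ(d)` is the number of positive divisors of `d`. -/
theorem crit_of_proper_power (k : ℕ) (u : FreeGroup (Fin k)) (hu : u ≠ 1)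
    (hnp : ¬ ∃ (v : FreeGroup (Fin k)) (e : ℕ), 2 ≤ e ∧ u = v ^ e)
    (d : ℕ) (hd : 2 ≤ d) (w : FreeGroup (Fin k)) (hw : w = u ^ d) :
    Crit (Subgroup.closure {w}) =
        {J : Subgroup (FreeGroup (Fin k)) |
          ∃ m : ℕ, 1 ≤ m ∧ m < d ∧ m ∣ d ∧ J = Subgroup.closure {u ^ m}} ∧
      primRank (Subgroup.closure {w}) = 1 ∧
      (Crit (Subgroup.closure {w})).ncard = d.divisors.card - 1 := by
  subst hw
  have hprim := primRank_eq_one u hu hd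
  have hwne : u ^ d ≠ 1 := pow_ne_one hu (by omega)
  have hcrit : Crit (Subgroup.closure {u ^ d}) =
      {J : Subgroup (FreeGroup (Fin k)) |
        ∃ m : ℕ, 1 ≤ m ∧ m < d ∧ m ∣ d ∧ J = Subgroup.closure {u ^ m}} := by
    ext J
    constructor
    · rintro ⟨hHJ, hnff, hrk⟩
      rw [hprim] at hrk
      obtain ⟨g, rfl⟩ := exists_gen_of_rkS_eq_one hrk
      have hg1 : g ≠ 1 := by
        rintro rfl
        rw [zpowers_one_eq_bot] at hHJ
        have := hHJ (subset_closure (Set.mem_singleton _))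
        rw [Subgroup.mem_bot] at this
        exact hwne this
      obtain ⟨n, hn⟩ := mem_zpowers_iff.1 (hHJ (subset_closure (Set.mem_singleton _)))
      have hnne : n ≠ 0 := by
        rintro rfl
        rw [zpow_zero] at hn
        exact hwne hn.symm
      have hrel : g ^ n = u ^ (d : ℤ) := by rw [zpow_natCast]; exact hn
      obtain ⟨c, hgc, huc⟩ := exists_common_zpowers g u n d hnne hrel
      obtain ⟨i, hi⟩ := mem_zpowers_iff.1 huc
      have hine : i ≠ 0 := by
        rintro rfl
        rw [zpow_zero] at hi
        exact hu hi.symm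
      have hzu : zpowers c = zpowers u := by
        rcases (by omega : i = 1 ∨ i = -1 ∨ 2 ≤ i ∨ i ≤ -2) with hi1 | hi1 | hi1 | hi1
        · subst hi1; rw [zpow_one] at hi; rw [hi]
        · subst hi1
          have : c⁻¹ = u := by rw [← hi, zpow_neg, zpow_one]
          rw [← this, zpowers_inv]
        · exfalso
          apply hnp
          refine ⟨c, i.toNat, by omega, ?_⟩
          rw [← hi, ← zpow_natCast c i.toNat]
          congr 1
          omega
        · exfalso
          apply hnp
          refine ⟨c⁻¹, (-i).toNat, by omega, ?_⟩
          rw [← hi, ← zpow_natCast c⁻¹ (-i).toNat, inv_zpow, ← zpow_neg]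
          congr 1
          omega
      rw [hzu] at hgc
      obtain ⟨j, hj⟩ := mem_zpowers_iff.1 hgc
      have hjne : j ≠ 0 := by
        rintro rfl
        rw [zpow_zero] at hj
        exact hg1 hj.symm
      set m := j.natAbs with hm
      have hmne : m ≠ 0 := Int.natAbs_ne_zero.2 hjne
      have hJm : zpowers g = zpowers (u ^ m) := by
        rcases Int.natAbs_eq j with hj2 | hj2
        · rw [← hj, hj2, zpow_natCast]
        · rw [← hj, hj2, zpow_neg, zpow_natCast, zpowers_inv]
      have hdvd : m ∣ d := by
        have h1 : u ^ (j * n) = u ^ (d : ℤ) := by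
          rw [zpow_mul, hj]
          exact hrel
        have h2 := zpow_left_inj hu h1
        have : (m : ℤ) ∣ (d : ℤ) := (Int.natAbs_dvd).2 ⟨n, h2.symm⟩
        exact_mod_cast this
      have hmled : m ≤ d := Nat.le_of_dvd (by omega) hdvd
      have hmltd : m < d := by
        rcases Nat.lt_or_ge m d with h | h
        · exact h
        · exfalso
          have hmd : m = d := by omega
          apply hnff
          have : zpowers g = Subgroup.closure {u ^ d} := by
            rw [hJm, hmd, zpowers_eq_closure]
          rw [this]
          exact isFreeFactor_self _
      exact ⟨m, by omega, hmltd, hdvd, by rw [hJm, zpowers_eq_closure]⟩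
    · rintro ⟨m, hm1, hmlt, hmdvd, rfl⟩
      obtain ⟨s, hds⟩ := hmdvd
      have hs2 : 2 ≤ s := by
        rcases Nat.lt_or_ge s 2 with h | h
        · exfalso
          interval_cases s
          · omega
          · omega
        · exact h
      have hpow : u ^ d = (u ^ m) ^ s := by rw [← pow_mul, ← hds]
      refine ⟨?_, ?_, ?_⟩
      · rw [Subgroup.closure_le, Set.singleton_subset_iff, SetLike.mem_coe]
        rw [hpow]
        exact Subgroup.pow_mem _ (subset_closure (Set.mem_singleton _)) s
      · have h1 := not_isFreeFactor_zpowers_pow (u ^ m) (pow_ne_one hu (by omega)) hs2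
        rw [← zpowers_eq_closure, hpow, ← zpowers_eq_closure]
        exact h1
      · rw [← zpowers_eq_closure, rkS_zpowers_eq_one (pow_ne_one hu (by omega)), hprim]
      
  refine ⟨hcrit, hprim, ?_⟩
  rw [hcrit]
  have himg : {J : Subgroup (FreeGroup (Fin k)) |
      ∃ m : ℕ, 1 ≤ m ∧ m < d ∧ m ∣ d ∧ J = Subgroup.closure {u ^ m}} =
      (fun m : ℕ => Subgroup.closure {u ^ m}) '' ((d.divisors.erase d : Finset ℕ) : Set ℕ) := by
    ext J
    simp only [Set.mem_setOf_eq, Set.mem_image, Finset.coe_erase, Set.mem_diff,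
      Finset.mem_coe, Nat.mem_divisors, Set.mem_singleton_iff]
    constructor
    · rintro ⟨m, hm1, hmlt, hmdvd, rfl⟩
      exact ⟨m, ⟨⟨hmdvd, by omega⟩, by omega⟩, rfl⟩
    · rintro ⟨m, ⟨⟨hmdvd, hd0⟩, hmne⟩, rfl⟩
      have hmled : m ≤ d := Nat.le_of_dvd (by omega) hmdvd
      have hm0 : m ≠ 0 := by
        rintro rfl
        exact hd0 (Nat.eq_zero_of_zero_dvd hmdvd)
      exact ⟨m, by omega, by omega, hmdvd, rfl⟩
  rw [himg]
  rw [Set.ncard_image_of_injOn]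
  · rw [Set.ncard_coe_finset, Finset.card_erase_of_mem (Nat.mem_divisors_self d (by omega))]
  · intro m1 hm1 m2 hm2 heq0
    have heq : Subgroup.closure {u ^ m1} = Subgroup.closure {u ^ m2} := heq0
    simp only [Finset.coe_erase, Set.mem_diff, Finset.mem_coe, Nat.mem_divisors,
      Set.mem_singleton_iff] at hm1 hm2
    have h1 : u ^ (m1 : ℤ) ∈ zpowers (u ^ (m2 : ℤ)) := by
      rw [zpow_natCast, zpow_natCast, zpowers_eq_closure, ← heq]
      exact subset_closure (Set.mem_singleton _)
    have h2 : u ^ (m2 : ℤ) ∈ zpowers (u ^ (m1 : ℤ)) := by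
      rw [zpow_natCast, zpow_natCast, zpowers_eq_closure, heq]
      exact subset_closure (Set.mem_singleton _)
    obtain ⟨t1, ht1⟩ := mem_zpowers_iff.1 h1
    obtain ⟨t2, ht2⟩ := mem_zpowers_iff.1 h2
    rw [← zpow_mul] at ht1 ht2
    have e1 := zpow_left_inj hu ht1
    have e2 := zpow_left_inj hu ht2
    have d1 : (m2 : ℤ) ∣ (m1 : ℤ) := ⟨t1, e1.symm⟩
    have d2 : (m1 : ℤ) ∣ (m2 : ℤ) := ⟨t2, e2.symm⟩
    have : (m1 : ℤ) = (m2 : ℤ) := Int.dvd_antisymm (by positivity) (by positivity) d2 d1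
    exact_mod_cast this
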